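/- For every m and every algorithm p enumerating the strings of complexity at most m, each group S^p_{m,s} (the s-th dyadic block of the enumeration, of size 2^s, corresponding to a 1 in the binary expansion of Ω_m) has complexity C(S^p_{m,s}) ≤ m − s + O(log m + C(p)). -/

import Mathlib

open scoped Classical

abbrev BinStr := List Bool

/-- A decompressor: a partial computable map (program, condition) ↦ output. -/
def IsDecompressor (D : BinStr → BinStr → Part BinStr) : Prop := Partrec₂ D

/-- Conditional Kolmogorov complexity with respect to decompressor `D`. -/
noncomputable def Cc (D : BinStr → BinStr → Part BinStr) (x y : BinStr) : ℕ :=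
  sInf { n | ∃ p : BinStr, p.length = n ∧ x ∈ D p y }

/-- A decompressor is universal if every decompressor is simulated via a prefix. -/
def IsUniversal (U : BinStr → BinStr → Part BinStr) : Prop :=
  IsDecompressor U ∧ ∀ D, IsDecompressor D → ∃ c : BinStr, ∀ p y, D p y = U (c ++ p) y

/-- Unconditional complexity. -/
noncomputable def C (U : BinStr → BinStr → Part BinStr) (x : BinStr) : ℕ := Cc U x []

/-- The fixed computable encoding of a finite set of strings as a string. -/
def codeSet (A : Finset BinStr) : BinStr := Nat.bits (Encodable.encode A)

/-- Complexity of a finite set of strings. -/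
noncomputable def CSet (U : BinStr → BinStr → Part BinStr) (A : Finset BinStr) : ℕ :=
  C U (codeSet A)

/-- The profile of a string `x`. -/
noncomputable def profile (U : BinStr → BinStr → Part BinStr) (x : BinStr) : Set (ℕ × ℕ) :=
  { ml | ∃ A : Finset BinStr, x ∈ A ∧ CSet U A ≤ ml.1 ∧ Nat.log 2 A.card ≤ ml.2 }

/-- Total conditional complexity `CT(x|y)`: length of a shortest *total* program mapping y to x. -/
noncomputable def CT (U : BinStr → BinStr → Part BinStr) (x y : BinStr) : ℕ :=
  sInf { n | ∃ p : BinStr, p.length = n ∧ (∀ y' : BinStr, (U p y').Dom) ∧ x ∈ U p y }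

/-- The ε-strong profile of `x`. -/
noncomputable def strongProfile (U : BinStr → BinStr → Part BinStr) (ε : ℕ) (x : BinStr) :
    Set (ℕ × ℕ) :=
  { ml | ∃ A : Finset BinStr, x ∈ A ∧ CT U (codeSet A) x ≤ ε ∧
      CSet U A ≤ ml.1 ∧ Nat.log 2 A.card ≤ ml.2 }

/-- `Ω_m`: the number of strings of complexity at most m. -/
noncomputable def Omega (U : BinStr → BinStr → Part BinStr) (m : ℕ) : ℕ :=
  Set.ncard { x : BinStr | C U x ≤ m }

/-- The Finset of all binary strings of length n. -/
def allStr : ℕ → Finset BinStr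
  | 0 => {[]}
  | n + 1 => (allStr n).image (List.cons true) ∪ (allStr n).image (List.cons false)

/-- The cylinder `{ u ++ v : v ∈ {0,1}^m }`. -/
def cyl (u : BinStr) (m : ℕ) : Finset BinStr := (allStr m).image (fun v => u ++ v)

/-- `p` (given by code `cd` computing `f`) enumerates `L_m`, the strings of complexity ≤ m:
`f` lists `L_m` without repetition on indices below `Ω_m`. -/
def EnumeratesLm (U : BinStr → BinStr → Part BinStr) (m : ℕ)
    (cd : Nat.Partrec.Code) (f : ℕ → BinStr) : Prop :=
  Set.InjOn f (Set.Iio (Omega U m)) ∧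
  (∀ x : BinStr, C U x ≤ m ↔ ∃ i < Omega U m, f i = x) ∧
  (∀ i : ℕ, i < Omega U m → cd.eval i = Part.some (Encodable.encode (f i)))

/-- The dyadic group `S^p_{m,s}`: the block of `2^s` consecutive elements of the
enumeration corresponding to the digit `2^s` in the binary expansion of `Ω_m`
(the elements with indices in `[⌊Ω_m/2^{s+1}⌋·2^{s+1}, ⌊Ω_m/2^{s+1}⌋·2^{s+1} + 2^s)`). -/
def Sgroup (f : ℕ → BinStr) (Ω s : ℕ) : Finset BinStr :=
  (Finset.Ico (Ω / 2 ^ (s + 1) * 2 ^ (s + 1)) (Ω / 2 ^ (s + 1) * 2 ^ (s + 1) + 2 ^ s)).image f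

/-- Complexity of the enumerating algorithm. -/
noncomputable def Cprog (U : BinStr → BinStr → Part BinStr) (cd : Nat.Partrec.Code) : ℕ :=
  C U (Nat.bits (Encodable.encode cd))

namespace GC
open Encodable


/-! ### Basic helper functions -/

/-- Interpret a list of bits (little-endian) as a natural number. -/
def natOf : List Bool → ℕ := fun l => l.foldr (fun b n => 2 * n + cond b 1 0) 0

def myDrop (n : ℕ) (l : List Bool) : List Bool := Nat.rec l (fun _ ih => ih.tail) n

def myTake (n : ℕ) (l : List Bool) : List Bool := (myDrop (l.length - n) l.reverse).reverse

/-- Split off an initial run of `true`s terminated by a `false`. -/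
def splitRun : List Bool → ℕ × List Bool := fun l =>
  l.rec ((0, []) : ℕ × List Bool) (fun b l ih => bif b then (ih.1 + 1, ih.2) else (0, l))

def parse (p : List Bool) : List Bool × ℕ × ℕ :=
  let a := splitRun p
  let q := myTake a.1 a.2
  let r2 := myDrop a.1 a.2
  let b := splitRun r2
  (q, natOf (myTake b.1 b.2), natOf (myDrop b.1 b.2))

def insrt (v : ℕ) : List ℕ → List ℕ := fun l =>
  l.rec [v] (fun x xs ih => if v < x then v :: x :: xs else if v = x then x :: xs else x :: ih)

def sortDedup (l : List ℕ) : List ℕ := l.foldr insrt []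

def listEncNat (l : List ℕ) : ℕ := l.foldr (fun v acc => Nat.pair v acc + 1) 0

def allSome : List (Option ℕ) → Option (List ℕ) := fun l =>
  l.foldr (fun o acc => o.bind fun v => acc.map (v :: ·)) (some [])

/-! ### Lemmas about them -/

@[simp] theorem natOf_nil : natOf [] = 0 := rfl
@[simp] theorem natOf_cons (b l) : natOf (b :: l) = 2 * natOf l + cond b 1 0 := rfl

theorem bits_cons {n : ℕ} (h : n ≠ 0) : Nat.bits n = n.bodd :: n.div2.bits := by
  have hlen : Nat.bits n ≠ [] := by
    intro he
    have := Nat.size_eq_bits_len n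
    rw [he] at this
    simp at this
    exact h (Nat.size_eq_zero.1 this.symm)
  have h1 := Nat.bodd_eq_bits_head n
  have h2 := Nat.div2_bits_eq_tail n
  rw [h1, h2]
  exact (List.cons_head!_tail hlen).symm |>.trans rfl |>.symm ▸ rfl

theorem natOf_bits (n : ℕ) : natOf (Nat.bits n) = n := by
  induction n using Nat.strong_induction_on with
  | _ n ih =>
    rcases eq_or_ne n 0 with rfl | h
    · simp [Nat.zero_bits]
    · rw [bits_cons h, natOf_cons, ih n.div2 (Nat.binaryRec_decreasing h), Nat.div2_val]
      have := Nat.mod_two_of_bodd n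
      cases hb : n.bodd <;> rw [hb] at this <;> simp_all <;> omega

theorem myDrop_eq (n : ℕ) (l : List Bool) : myDrop n l = l.drop n := by
  induction n with
  | zero => rfl
  | succ n ih => show (myDrop n l).tail = _ ; rw [ih, List.tail_drop]

theorem myDrop_spec (l₁ l₂ : List Bool) : myDrop l₁.length (l₁ ++ l₂) = l₂ := by
  rw [myDrop_eq, List.drop_left]

theorem myTake_spec (l₁ l₂ : List Bool) : myTake l₁.length (l₁ ++ l₂) = l₁ := by
  unfold myTake
  rw [myDrop_eq, List.reverse_append, List.length_append]
  have : l₁.length + l₂.length - l₁.length = l₂.reverse.length := by simp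
  rw [this, List.drop_left, List.reverse_reverse]

theorem splitRun_spec (n : ℕ) (r : List Bool) :
    splitRun (List.replicate n true ++ false :: r) = (n, r) := by
  induction n with
  | zero => rfl
  | succ n ih =>
    rw [List.replicate_succ, List.cons_append]
    show ((splitRun (List.replicate n true ++ false :: r)).1 + 1,
      (splitRun (List.replicate n true ++ false :: r)).2) = _
    rw [ih]

theorem parse_spec (q : List Bool) (s k : ℕ) :
    parse (List.replicate q.length true ++ false ::
      (q ++ (List.replicate (Nat.bits s).length true ++ false :: (Nat.bits s ++ Nat.bits k)))) =
      (q, s, k) := by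
  unfold parse
  rw [splitRun_spec]
  simp only
  rw [myTake_spec, myDrop_spec, splitRun_spec]
  simp only
  rw [myTake_spec, myDrop_spec, natOf_bits, natOf_bits]


@[simp] theorem allSome_nil : allSome [] = some [] := rfl
@[simp] theorem allSome_cons (o : Option ℕ) (l : List (Option ℕ)) :
    allSome (o :: l) = o.bind fun v => (allSome l).map (v :: ·) := rfl

@[simp] theorem insrt_nil (v : ℕ) : insrt v [] = [v] := rfl
@[simp] theorem insrt_cons (v x : ℕ) (xs : List ℕ) :
    insrt v (x :: xs) = if v < x then v :: x :: xs else if v = x then x :: xs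
      else x :: insrt v xs := rfl

theorem mem_insrt (y v : ℕ) (l : List ℕ) : y ∈ insrt v l ↔ y = v ∨ y ∈ l := by
  induction l with
  | nil => simp
  | cons x xs ih =>
    rw [insrt_cons]
    split_ifs with h1 h2
    · simp
    · subst h2; simp
    · simp [ih]; tauto

theorem sorted_insrt (v : ℕ) (l : List ℕ) (h : l.Pairwise (· < ·)) :
    (insrt v l).Pairwise (· < ·) := by
  induction l with
  | nil => simp
  | cons x xs ih =>
    rw [List.pairwise_cons] at h
    rw [insrt_cons]
    split_ifs with h1 h2
    · refine List.pairwise_cons.2 ⟨?_, List.pairwise_cons.2 h⟩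
      intro b hb
      rcases List.mem_cons.1 hb with rfl | hb
      · exact h1
      · exact h1.trans (h.1 b hb)
    · exact List.pairwise_cons.2 h
    · refine List.pairwise_cons.2 ⟨?_, ih h.2⟩
      intro b hb
      rcases (mem_insrt b v xs).1 hb with rfl | hb
      · omega
      · exact h.1 b hb

theorem sortDedup_sorted (l : List ℕ) : (sortDedup l).Pairwise (· < ·) := by
  induction l with
  | nil => simp [sortDedup]
  | cons x xs ih => exact sorted_insrt x _ ih

theorem mem_sortDedup (y : ℕ) (l : List ℕ) : y ∈ sortDedup l ↔ y ∈ l := by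
  induction l with
  | nil => simp [sortDedup]
  | cons x xs ih => show y ∈ insrt x (sortDedup xs) ↔ _ ; rw [mem_insrt, ih]; simp

theorem allSome_map {r : List ℕ} {F : ℕ → Option ℕ} {v : ℕ → ℕ}
    (h : ∀ i ∈ r, F i = some (v i)) : allSome (r.map F) = some (r.map v) := by
  induction r with
  | nil => rfl
  | cons x xs ih =>
    rw [List.map_cons, allSome_cons, h x (by simp), ih (fun i hi => h i (by simp [hi]))]
    rfl

theorem allSome_mono {r : List ℕ} {F G : ℕ → Option ℕ}
    (h : ∀ i v, F i = some v → G i = some v) {vals : List ℕ}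
    (hv : allSome (r.map F) = some vals) : allSome (r.map G) = some vals := by
  induction r generalizing vals with
  | nil => exact hv
  | cons x xs ih =>
    rw [List.map_cons, allSome_cons] at hv
    have hx := hv
    rcases hFx : F x with _ | v
    · rw [hFx] at hx; simp at hx
    · rw [hFx] at hx
      rcases hrest : allSome (xs.map F) with _ | vs
      · rw [hrest] at hx; simp at hx
      · rw [hrest] at hx
        rw [List.map_cons, allSome_cons, h x v hFx, ih hrest]
        exact hx

/-! ### Encoding of finite sets -/

def enc2 : BinStr → BinStr → Prop := fun a b => encode a ≤ encode b

instance : DecidableRel enc2 := fun _ _ => Nat.decLe _ _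
instance : IsTrans BinStr enc2 := ⟨fun _ _ _ => Nat.le_trans⟩
instance : IsAntisymm BinStr enc2 := ⟨fun _ _ h h' => encode_injective (Nat.le_antisymm h h')⟩
instance : IsTotal BinStr enc2 := ⟨fun _ _ => Nat.le_total _ _⟩

theorem encode_finset_eq (A : Finset BinStr) : encode A = encode (A.val.sort enc2) := rfl

theorem encode_list_binstr (M : List BinStr) : encode M = listEncNat (M.map encode) := by
  induction M with
  | nil => rfl
  | cons x xs ih =>
    show Nat.pair (encode x) (encode xs) + 1 = _
    rw [ih]; rfl

/-- The key characterization: encoding a Finset built from a list of values. -/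
theorem encode_finset_of_list (A : Finset BinStr) (vals : List ℕ)
    (hmem : ∀ y : ℕ, y ∈ vals ↔ ∃ b ∈ A, encode b = y) :
    encode A = listEncNat (sortDedup vals) := by
  have hS : List.Perm (Multiset.sort A.val enc2) A.val.toList := by
    rw [← Multiset.coe_eq_coe, Multiset.sort_eq, Multiset.coe_toList]
  have hSnodup : (A.val.sort enc2).Nodup := hS.nodup_iff.2 A.nodup_toList
  have hSsorted : (A.val.sort enc2).Pairwise enc2 := Multiset.pairwise_sort ..
  -- the two ℕ-lists
  have key : (A.val.sort enc2).map encode = sortDedup vals := by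
    have h1 : ((A.val.sort enc2).map encode).Pairwise (· < ·) := by
      have hle : ((A.val.sort enc2).map encode).Pairwise (· ≤ ·) :=
        List.pairwise_map.2 (hSsorted.imp (fun h => h))
      have hne : ((A.val.sort enc2).map encode).Nodup := hSnodup.map encode_injective
      exact hle.and hne |>.imp (fun ⟨h1, h2⟩ => lt_of_le_of_ne h1 h2)
    have h2 : (sortDedup vals).Pairwise (· < ·) := sortDedup_sorted vals
    have hperm : List.Perm ((A.val.sort enc2).map encode) (sortDedup vals) := by
      refine (List.perm_ext_iff_of_nodup h1.nodup h2.nodup).2 ?_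
      intro y
      rw [mem_sortDedup, hmem, List.mem_map]
      constructor
      · rintro ⟨b, hb, rfl⟩
        exact ⟨b, by simpa using hS.mem_iff.1 hb, rfl⟩
      · rintro ⟨b, hb, rfl⟩
        exact ⟨b, hS.mem_iff.2 (by simpa using hb), rfl⟩
    haveI : IsAntisymm ℕ (· < ·) := ⟨fun a b h h' => absurd (h.trans h') (lt_irrefl _)⟩
    exact List.Perm.eq_of_pairwise' h1 h2 hperm
  rw [encode_finset_eq, encode_list_binstr, key]


open Primrec in
theorem primrec_natOf : Primrec natOf :=
  list_foldr .id (const 0) <| .to₂ <|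
    nat_add.comp (nat_mul.comp (const 2) (snd.comp snd))
      (Primrec.cond (fst.comp snd) (const 1) (const 0))

open Primrec in
theorem primrec_myDrop : Primrec₂ myDrop :=
  (nat_rec' fst snd (.to₂ <| list_tail.comp (snd.comp snd))).to₂

open Primrec in
theorem primrec_myTake : Primrec₂ myTake :=
  (list_reverse.comp (primrec_myDrop.comp (nat_sub.comp (list_length.comp snd) fst)
    (list_reverse.comp snd))).to₂

open Primrec in
theorem primrec_splitRun : Primrec splitRun :=
  (list_rec .id (const ((0, []) : ℕ × List Bool)) <| .to₂ <|
    Primrec.cond (fst.comp snd)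
      (Primrec.pair (Primrec.succ.comp (fst.comp (snd.comp (snd.comp snd))))
        (snd.comp (snd.comp (snd.comp snd))))
      (Primrec.pair (const 0) (fst.comp (snd.comp snd)))).of_eq fun l => by
        induction l <;> rfl

open Primrec in
theorem primrec_parse : Primrec parse := by
  have h1 : Primrec (fun p : List Bool => (splitRun p).2) := snd.comp primrec_splitRun
  have h2 : Primrec (fun p : List Bool => (splitRun p).1) := fst.comp primrec_splitRun
  have hq : Primrec (fun p : List Bool => myTake (splitRun p).1 (splitRun p).2) :=
    primrec_myTake.comp h2 h1
  have hr2 : Primrec (fun p : List Bool => myDrop (splitRun p).1 (splitRun p).2) :=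
    primrec_myDrop.comp h2 h1
  have hb : Primrec (fun p : List Bool => splitRun (myDrop (splitRun p).1 (splitRun p).2)) :=
    primrec_splitRun.comp hr2
  exact hq.pair ((primrec_natOf.comp (primrec_myTake.comp (fst.comp hb) (snd.comp hb))).pair
    (primrec_natOf.comp (primrec_myDrop.comp (fst.comp hb) (snd.comp hb))))

open Primrec in
theorem primrec_insrt : Primrec₂ insrt := by
  have hv : Primrec (fun a : (ℕ × List ℕ) × ℕ × List ℕ × List ℕ => a.1.1) := fst.comp fst
  have hx : Primrec (fun a : (ℕ × List ℕ) × ℕ × List ℕ × List ℕ => a.2.1) := fst.comp snd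
  have hxs : Primrec (fun a : (ℕ × List ℕ) × ℕ × List ℕ × List ℕ => a.2.2.1) :=
    fst.comp (snd.comp snd)
  have hih : Primrec (fun a : (ℕ × List ℕ) × ℕ × List ℕ × List ℕ => a.2.2.2) :=
    snd.comp (snd.comp snd)
  have hh : Primrec (fun a : (ℕ × List ℕ) × ℕ × List ℕ × List ℕ =>
      if a.1.1 < a.2.1 then a.1.1 :: a.2.1 :: a.2.2.1
      else if a.1.1 = a.2.1 then a.2.1 :: a.2.2.1 else a.2.1 :: a.2.2.2) :=
    Primrec.ite (PrimrecRel.comp nat_lt hv hx)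
      (list_cons.comp hv (list_cons.comp hx hxs))
      (Primrec.ite (PrimrecRel.comp Primrec.eq hv hx) (list_cons.comp hx hxs)
        (list_cons.comp hx hih))
  have : Primrec (fun p : ℕ × List ℕ => insrt p.1 p.2) :=
    (list_rec snd (list_cons.comp fst (const [])) hh.to₂).of_eq fun p => rfl
  exact this.to₂

open Primrec in
theorem primrec_sortDedup : Primrec sortDedup :=
  list_foldr .id (const []) <| .to₂ <| primrec_insrt.comp (fst.comp snd) (snd.comp snd)

open Primrec in
theorem primrec_listEncNat : Primrec listEncNat :=
  list_foldr .id (const 0) <| .to₂ <|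
    Primrec.succ.comp (Primrec₂.natPair.comp (fst.comp snd) (snd.comp snd))

open Primrec in
theorem primrec_allSome : Primrec allSome :=
  list_foldr .id (const (some [])) <| .to₂ <|
    option_bind (fst.comp snd) (.to₂ <|
      option_map (snd.comp (snd.comp fst)) (.to₂ <| list_cons.comp (snd.comp fst) snd))

theorem getD_map_range {N i : ℕ} (f : ℕ → List Bool) (h : i < N) :
    ((List.range N).map f).getD i [] = f i := by
  have hi : i < ((List.range N).map f).length := by simpa
  rw [List.getD_eq_getElem _ _ hi]
  simp

open Primrec in
theorem primrec_bits : Primrec Nat.bits := by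
  have hcore : Primrec (fun p : Unit × List (List Bool) =>
      (Nat.casesOn p.2.length [] fun n => Nat.bodd (n+1) :: p.2.getD ((n+1)/2) [] :
        List Bool)) := by
    refine nat_casesOn (list_length.comp snd) (const []) ?_
    exact list_cons.comp (nat_bodd.comp (Primrec.succ.comp snd))
      ((list_getD []).comp (snd.comp fst)
        (nat_div.comp (Primrec.succ.comp snd) (const 2)))
  have hg : Primrec₂ (fun (_ : Unit) (l : List (List Bool)) =>
      (some (Nat.casesOn l.length [] fun n => Nat.bodd (n+1) :: l.getD ((n+1)/2) []) :
        Option (List Bool))) := (option_some.comp hcore).to₂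
  have H : ∀ (a : Unit) (n : ℕ),
      (some (Nat.casesOn ((List.range n).map Nat.bits).length []
        fun k => Nat.bodd (k+1) :: ((List.range n).map Nat.bits).getD ((k+1)/2) []) :
          Option (List Bool)) = some (Nat.bits n) := by
    intro a n
    have hlen : ((List.range n).map Nat.bits).length = n := by simp
    cases n with
    | zero =>
      simp [Nat.zero_bits]
    | succ n =>
      have hlt : (n+1)/2 < n+1 := Nat.div_lt_self (Nat.succ_pos n) one_lt_two
      have : (Nat.casesOn ((List.range (n+1)).map Nat.bits).length []
          fun k => Nat.bodd (k+1) :: ((List.range (n+1)).map Nat.bits).getD ((k+1)/2) []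
            : List Bool) =
          Nat.bodd (n+1) :: ((List.range (n+1)).map Nat.bits).getD ((n+1)/2) [] := by
        rw [hlen]
      rw [this, getD_map_range _ hlt]
      rw [bits_cons (Nat.succ_ne_zero n), Nat.div2_val]
  exact (Primrec.nat_strong_rec (fun (_ : Unit) (n : ℕ) => Nat.bits n) hg
    (fun a n => H a n)).comp (const ()) .id

def pow2 (s : ℕ) : ℕ := Nat.rec 1 (fun _ ih => 2 * ih) s

theorem pow2_eq (s : ℕ) : pow2 s = 2 ^ s := by
  induction s with
  | zero => rfl
  | succ n ih => show 2 * pow2 n = _ ; rw [ih, pow_succ]; ring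

open Primrec in
theorem primrec_pow2 : Primrec pow2 :=
  nat_rec' .id (const 1) (.to₂ <| nat_mul.comp (const 2) (snd.comp snd))

/-- The verification function: given encodings `e` of the code, `s`, `k` and a budget `t`. -/
def Gfun (e s k t : ℕ) : Option BinStr :=
  (allSome ((List.range (pow2 s)).map fun i =>
      Nat.Partrec.Code.evaln t (Denumerable.ofNat Nat.Partrec.Code e) (k * pow2 (s+1) + i))).map
    fun vals => Nat.bits (listEncNat (sortDedup vals))

set_option maxHeartbeats 1000000 in
open Primrec in
theorem primrec_Gfun : Primrec (fun q : (ℕ × ℕ × ℕ) × ℕ => Gfun q.1.1 q.1.2.1 q.1.2.2 q.2) := by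
  have he : Primrec (fun q : (ℕ × ℕ × ℕ) × ℕ => q.1.1) := fst.comp fst
  have hs : Primrec (fun q : (ℕ × ℕ × ℕ) × ℕ => q.1.2.1) := fst.comp (snd.comp fst)
  have hk : Primrec (fun q : (ℕ × ℕ × ℕ) × ℕ => q.1.2.2) := snd.comp (snd.comp fst)
  have ht : Primrec (fun q : (ℕ × ℕ × ℕ) × ℕ => q.2) := snd
  have hc : Primrec (fun q : (ℕ × ℕ × ℕ) × ℕ => Denumerable.ofNat Nat.Partrec.Code q.1.1) :=
    (Primrec.ofNat _).comp he
  have ha : Primrec (fun q : (ℕ × ℕ × ℕ) × ℕ => q.1.2.2 * pow2 (q.1.2.1 + 1)) :=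
    nat_mul.comp hk (primrec_pow2.comp (Primrec.succ.comp hs))
  have hlist : Primrec (fun q : (ℕ × ℕ × ℕ) × ℕ =>
      (List.range (pow2 q.1.2.1)).map fun i =>
        Nat.Partrec.Code.evaln q.2 (Denumerable.ofNat Nat.Partrec.Code q.1.1)
          (q.1.2.2 * pow2 (q.1.2.1 + 1) + i)) := by
    refine list_map (list_range.comp (primrec_pow2.comp hs)) ?_
    exact Nat.Partrec.Code.primrec_evaln.comp
      (((ht.comp fst).pair (hc.comp fst)).pair (nat_add.comp (ha.comp fst) snd))
  have hout : Primrec (fun y : (((ℕ × ℕ × ℕ) × ℕ) × List ℕ) =>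
      Nat.bits (listEncNat (sortDedup y.2))) :=
    primrec_bits.comp (primrec_listEncNat.comp (primrec_sortDedup.comp snd))
  have := option_map (primrec_allSome.comp hlist) hout.to₂
  exact this

/-- The decompressor. -/
def Dfun (U : BinStr → BinStr → Part BinStr) : BinStr → BinStr → Part BinStr := fun p _y =>
  (U (parse p).1 []).bind fun bl =>
    Nat.rfindOpt fun t => Gfun (natOf bl) (parse p).2.1 (parse p).2.2 t

theorem partrec_Dfun (U : BinStr → BinStr → Part BinStr) (hU : Partrec₂ U) :
    Partrec₂ (Dfun U) := by
  have hf : Partrec (fun pq : BinStr × BinStr => U (parse pq.1).1 []) :=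
    hU.comp (Primrec.fst.comp (primrec_parse.comp Primrec.fst)).to_comp
      (Computable.const ([] : BinStr))
  have hG : Computable₂ (fun (x : (BinStr × BinStr) × BinStr) (t : ℕ) =>
      Gfun (natOf x.2) (parse x.1.1).2.1 (parse x.1.1).2.2 t) := by
    have hp : Primrec (fun y : ((BinStr × BinStr) × BinStr) × ℕ =>
        parse y.1.1.1) :=
      primrec_parse.comp (Primrec.fst.comp (Primrec.fst.comp Primrec.fst))
    have h1 : Primrec (fun y : ((BinStr × BinStr) × BinStr) × ℕ => natOf y.1.2) :=
      primrec_natOf.comp (Primrec.snd.comp Primrec.fst)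
    have h2 : Primrec (fun y : ((BinStr × BinStr) × BinStr) × ℕ => (parse y.1.1.1).2.1) :=
      Primrec.fst.comp (Primrec.snd.comp hp)
    have h3 : Primrec (fun y : ((BinStr × BinStr) × BinStr) × ℕ => (parse y.1.1.1).2.2) :=
      Primrec.snd.comp (Primrec.snd.comp hp)
    have : Primrec (fun y : ((BinStr × BinStr) × BinStr) × ℕ =>
        Gfun (natOf y.1.2) (parse y.1.1.1).2.1 (parse y.1.1.1).2.2 y.2) :=
      primrec_Gfun.comp ((h1.pair (h2.pair h3)).pair Primrec.snd)
    exact this.to_comp.to₂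
  exact hf.bind (Partrec.rfindOpt hG)

end GC
namespace GC
open Encodable

theorem mem_allStr (n : ℕ) (l : BinStr) : l ∈ allStr n ↔ l.length = n := by
  induction n generalizing l with
  | zero =>
    simp only [allStr, Finset.mem_singleton, List.length_eq_zero_iff]
  | succ n ih =>
    simp only [allStr, Finset.mem_union, Finset.mem_image]
    cases l with
    | nil => simp
    | cons b bs => cases b <;> simp [ih, eq_comm]

theorem sum_two_pow (n : ℕ) : ∑ i ∈ Finset.range n, 2 ^ i = 2 ^ n - 1 := by
  induction n with
  | zero => rfl
  | succ n ih =>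
    rw [Finset.sum_range_succ, ih, pow_succ]
    have : 1 ≤ 2 ^ n := Nat.one_le_two_pow
    omega

theorem card_allStr (n : ℕ) : (allStr n).card = 2 ^ n := by
  induction n with
  | zero => rfl
  | succ n ih =>
    have hinj : ∀ b : Bool, Function.Injective (List.cons b : BinStr → BinStr) := by
      intro b x y h; injection h
    have hdisj : Disjoint ((allStr n).image (List.cons true))
        ((allStr n).image (List.cons false)) := by
      rw [Finset.disjoint_left]
      rintro x hx hy
      obtain ⟨u, _, rfl⟩ := Finset.mem_image.1 hx
      obtain ⟨v, _, hv⟩ := Finset.mem_image.1 hy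
      simp at hv
    rw [show allStr (n + 1) =
      (allStr n).image (List.cons true) ∪ (allStr n).image (List.cons false) from rfl]
    rw [Finset.card_union_of_disjoint hdisj, Finset.card_image_of_injective _ (hinj true),
      Finset.card_image_of_injective _ (hinj false), ih, pow_succ]
    omega

/-- Counting bound on `Ω_m`. -/
theorem omega_lt (U : BinStr → BinStr → Part BinStr)
    (hprog : ∀ x : BinStr, ∃ p : BinStr, p.length = C U x ∧ x ∈ U p []) (m : ℕ) :
    Omega U m < 2 ^ (m + 1) := by
  classical
  choose g hg1 hg2 using hprog
  set S : Set BinStr := { x : BinStr | C U x ≤ m } with hS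
  set bigF : Finset BinStr := (Finset.range (m + 1)).biUnion allStr with hbigF
  have hmap : ∀ x ∈ S, g x ∈ (bigF : Set BinStr) := by
    intro x hx
    simp only [hbigF, Finset.coe_biUnion, Finset.coe_range, Set.mem_iUnion]
    exact ⟨(g x).length, by simp [hg1 x, Nat.lt_succ_of_le hx], (mem_allStr _ _).2 rfl⟩
  have hinj : Set.InjOn g S := by
    intro x _ y _ h
    exact Part.mem_unique (hg2 x) (h ▸ hg2 y)
  have hcard : Omega U m ≤ bigF.card := by
    have := Set.ncard_le_ncard_of_injOn g hmap hinj (bigF.finite_toSet)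
    rwa [Set.ncard_coe_finset] at this
  have hbig : bigF.card ≤ 2 ^ (m + 1) - 1 := by
    have heq : ∑ i ∈ Finset.range (m + 1), (allStr i).card = 2 ^ (m + 1) - 1 := by
      rw [Finset.sum_congr rfl fun i _ => card_allStr i, sum_two_pow]
    exact le_trans Finset.card_biUnion_le (le_of_eq heq)
  have : 1 ≤ 2 ^ (m + 1) := Nat.one_le_two_pow
  omega

theorem group_complexity'
    (U : BinStr → BinStr → Part BinStr) (hU : IsUniversal U) :
    ∃ c : ℕ, ∀ (m s : ℕ) (cd : Nat.Partrec.Code) (f : ℕ → BinStr),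
      EnumeratesLm U m cd f →
      Nat.testBit (Omega U m) s = true →
      CSet U (Sgroup f (Omega U m) s) ≤
        (m - s) + c * (Nat.log 2 m + 1 + Cprog U cd) := by
  classical
  have hD : IsDecompressor (Dfun U) := partrec_Dfun U hU.1
  obtain ⟨cU, hcU⟩ := hU.2 _ hD
  have hDid : IsDecompressor (fun p (_ : BinStr) => Part.some p) := Computable.fst
  obtain ⟨cI, hcI⟩ := hU.2 _ hDid
  -- every string has a program of shortest length
  have hne : ∀ x : BinStr, { n | ∃ p : BinStr, p.length = n ∧ x ∈ U p [] }.Nonempty := by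
    intro x
    refine ⟨(cI ++ x).length, cI ++ x, rfl, ?_⟩
    rw [← hcI x []]
    exact Part.mem_some x
  have hprog : ∀ x : BinStr, ∃ p : BinStr, p.length = C U x ∧ x ∈ U p [] := fun x =>
    Nat.sInf_mem (hne x)
  refine ⟨cU.length + 4, ?_⟩
  intro m s cd f hEnum hbit
  set Ω := Omega U m with hΩdef
  have hΩ : Ω < 2 ^ (m + 1) := omega_lt U hprog m
  have h2s : 2 ^ s ≤ Ω := Nat.ge_two_pow_of_testBit hbit
  have hsm : s ≤ m := by
    by_contra h
    push_neg at h
    have : 2 ^ (m + 1) ≤ 2 ^ s := Nat.pow_le_pow_right (by norm_num) h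
    omega
  set k := Ω / 2 ^ (s + 1) with hkdef
  set a := k * 2 ^ (s + 1) with hadef
  have hk : k < 2 ^ (m - s) := by
    have h1 : a ≤ Ω := Nat.div_mul_le_self _ _
    have h2 : 2 ^ (m + 1) = 2 ^ (m - s) * 2 ^ (s + 1) := by
      rw [← pow_add]
      congr 1
      omega
    have := lt_of_le_of_lt h1 hΩ
    rw [h2] at this
    exact Nat.lt_of_mul_lt_mul_right this
  have ha2 : a + 2 ^ s ≤ Ω := by
    have hmod : Nat.testBit (Ω % 2 ^ (s + 1)) s = true := by
      rw [Nat.testBit_mod_two_pow]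
      simp [hbit]
    have h1 : 2 ^ s ≤ Ω % 2 ^ (s + 1) := Nat.ge_two_pow_of_testBit hmod
    have h2 : a + Ω % 2 ^ (s + 1) = Ω := by
      show k * 2 ^ (s + 1) + Ω % 2 ^ (s + 1) = Ω
      rw [Nat.mul_comm]
      exact Nat.div_add_mod Ω (2 ^ (s + 1))
    omega
  -- shortest program for the code
  obtain ⟨q, hqlen, hqmem⟩ : ∃ q : BinStr, q.length = Cprog U cd ∧
      (Nat.bits (encode cd) : BinStr) ∈ U q [] := Nat.sInf_mem (hne _)
  -- the program
  set L := (Nat.bits s).length with hLdef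
  set p₀ : BinStr := List.replicate q.length true ++ false ::
      (q ++ (List.replicate L true ++ false :: (Nat.bits s ++ Nat.bits k))) with hp₀
  have hparse : parse p₀ = (q, s, k) := parse_spec q s k
  set A := Sgroup f Ω s with hA
  have hAeq : A = (Finset.Ico a (a + 2 ^ s)).image f := rfl
  -- the values list
  set vals : List ℕ := (List.range (2 ^ s)).map fun i => encode (f (a + i)) with hvals
  have hencA : encode A = listEncNat (sortDedup vals) := by
    refine encode_finset_of_list A vals ?_
    intro y
    simp only [hvals, List.mem_map, List.mem_range, hAeq, Finset.mem_image, Finset.mem_Ico]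
    constructor
    · rintro ⟨i, hi, rfl⟩
      exact ⟨f (a + i), ⟨a + i, ⟨Nat.le_add_right _ _, Nat.add_lt_add_left hi a⟩, rfl⟩, rfl⟩
    · rintro ⟨b, ⟨j, ⟨hj1, hj2⟩, rfl⟩, rfl⟩
      refine ⟨j - a, ?_, by rw [Nat.add_sub_cancel' hj1]⟩
      rw [tsub_lt_iff_left hj1]
      exact hj2
  -- membership of the codeSet in the decompressor output
  have hmem : codeSet A ∈ Dfun U p₀ [] := by
    show codeSet A ∈ (U (parse p₀).1 []).bind fun bl =>
      Nat.rfindOpt fun t => Gfun (natOf bl) (parse p₀).2.1 (parse p₀).2.2 t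
    rw [hparse]
    rw [Part.mem_bind_iff]
    refine ⟨Nat.bits (encode cd), hqmem, ?_⟩
    simp only [natOf_bits]
    have hcode : Denumerable.ofNat Nat.Partrec.Code (encode cd) = cd :=
      Denumerable.ofNat_encode cd
    -- monotonicity of Gfun in t
    have hmono : ∀ {x : BinStr} {t t' : ℕ}, t ≤ t' →
        x ∈ Gfun (encode cd) s k t → x ∈ Gfun (encode cd) s k t' := by
      intro x t t' htt hx
      simp only [Gfun, Option.mem_def, Option.map_eq_some_iff] at hx ⊢
      obtain ⟨vs, hvs, rfl⟩ := hx
      refine ⟨vs, ?_, rfl⟩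
      exact allSome_mono (fun i v hv => Nat.Partrec.Code.evaln_mono htt hv) hvs
    rw [Nat.rfindOpt_mono fun {_ _ _} h h' => hmono h h']
    -- find a sufficient budget
    have hev : ∀ i : ℕ, ∃ t, i < 2 ^ s → encode (f (a + i)) ∈
        Nat.Partrec.Code.evaln t cd (a + i) := by
      intro i
      by_cases hi : i < 2 ^ s
      · have hiΩ : a + i < Ω := by omega
        have h1 := hEnum.2.2 (a + i) hiΩ
        have h2 : encode (f (a + i)) ∈ cd.eval (a + i) := by
          rw [h1]; exact Part.mem_some _
        obtain ⟨t, ht⟩ := Nat.Partrec.Code.evaln_complete.1 h2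
        exact ⟨t, fun _ => ht⟩
      · exact ⟨0, fun h => absurd h hi⟩
    choose tf htf using hev
    refine ⟨(Finset.range (2 ^ s)).sup tf, ?_⟩
    have hall : ∀ i ∈ List.range (2 ^ s),
        Nat.Partrec.Code.evaln ((Finset.range (2 ^ s)).sup tf) cd (a + i) =
          some (encode (f (a + i))) := by
      intro i hi
      rw [List.mem_range] at hi
      have hle : tf i ≤ (Finset.range (2 ^ s)).sup tf :=
        Finset.le_sup (Finset.mem_range.2 hi)
      exact Nat.Partrec.Code.evaln_mono hle (htf i hi)
    show Gfun (encode cd) s k ((Finset.range (2 ^ s)).sup tf) = some (codeSet A)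
    simp only [Gfun, hcode, pow2_eq]
    rw [allSome_map (v := fun i => encode (f (a + i))) (fun i hi => hall i hi)]
    simp only [Option.map_some]
    rw [← hvals, ← hencA]
    rfl
  -- conclude
  have hmemU : codeSet A ∈ U (cU ++ p₀) [] := by
    rw [← hcU p₀ []]
    exact hmem
  have hle : CSet U A ≤ (cU ++ p₀).length :=
    Nat.sInf_le ⟨cU ++ p₀, rfl, hmemU⟩
  -- length computation
  have hbk : (Nat.bits k).length ≤ m - s := by
    rw [Nat.size_eq_bits_len]
    exact Nat.size_le.2 hk
  have hbs : L ≤ Nat.log 2 m + 1 := by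
    rw [hLdef, Nat.size_eq_bits_len]
    refine Nat.size_le.2 ?_
    calc s ≤ m := hsm
      _ < 2 ^ (Nat.log 2 m + 1) := Nat.lt_pow_succ_log_self (by norm_num) m
  have hlen : (cU ++ p₀).length =
      cU.length + (2 * q.length + 2 * L + 2 + (Nat.bits k).length) := by
    simp only [hp₀, List.length_append, List.length_replicate, List.length_cons]
    omega
  rw [hlen] at hle
  refine le_trans hle ?_
  rw [hqlen]
  have hL1 : 1 ≤ Nat.log 2 m + 1 := by omega
  set Lg := Nat.log 2 m + 1
  set P := Cprog U cd
  calc cU.length + (2 * P + 2 * L + 2 + (Nat.bits k).length)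
      ≤ cU.length + (2 * P + 2 * Lg + 2 + (m - s)) := by omega
    _ ≤ (m - s) + (cU.length + 4) * (Lg + P) := by nlinarith
end GC

/-- C(S^p_{m,s}) ≤ m − s + O(log m + C(p)). -/
theorem group_complexity
    (U : BinStr → BinStr → Part BinStr) (hU : IsUniversal U) :
    ∃ c : ℕ, ∀ (m s : ℕ) (cd : Nat.Partrec.Code) (f : ℕ → BinStr),
      EnumeratesLm U m cd f →
      Nat.testBit (Omega U m) s = true →
      CSet U (Sgroup f (Omega U m) s) ≤
        (m - s) + c * (Nat.log 2 m + 1 + Cprog U cd) := by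
  exact GC.group_complexity' U hU
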